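/- Over the max-plus semifield, for an n×n matrix A with Tr(A) ≤ 0 (i.e., tr(A) ⊕ tr(A²) ⊕ ⋯ ⊕ tr(Aⁿ) ≤ 0) and a vector b, every vector of the form x = A* u with u regular and u ≥ b is a regular solution of the inequality A x ⊕ b ≤ x, where A* = I ⊕ A ⊕ ⋯ ⊕ A^{n−1}. -/

import Mathlib

/-- Max-plus matrix–vector product: `(A x)_i = max_j (a_{ij} + x_j)`. -/
noncomputable def mpMulVec {n : ℕ} (A : Fin n → Fin n → EReal) (x : Fin n → EReal) :
    Fin n → EReal :=
  fun i => Finset.univ.sup fun j => A i j + x j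

/-- Max-plus matrix product. -/
noncomputable def mpMul {n : ℕ} (A B : Fin n → Fin n → EReal) :
    Fin n → Fin n → EReal :=
  fun i j => Finset.univ.sup fun k => A i k + B k j

/-- Max-plus identity matrix: `0` on the diagonal and `-∞` elsewhere. -/
noncomputable def mpId {n : ℕ} : Fin n → Fin n → EReal :=
  fun i j => if i = j then 0 else ⊥

/-- Max-plus matrix power. -/
noncomputable def mpPow {n : ℕ} (A : Fin n → Fin n → EReal) : ℕ → (Fin n → Fin n → EReal)
  | 0 => mpId
  | k + 1 => mpMul (mpPow A k) A

/-- Max-plus trace: maximum of the diagonal entries. -/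
noncomputable def mpTrace {n : ℕ} (A : Fin n → Fin n → EReal) : EReal :=
  Finset.univ.sup fun i => A i i

/-- `Tr(A) = tr A ⊕ tr A² ⊕ ⋯ ⊕ tr Aⁿ`. -/
noncomputable def mpTr {n : ℕ} (A : Fin n → Fin n → EReal) : EReal :=
  (Finset.Icc 1 n).sup fun k => mpTrace (mpPow A k)

/-- The Kleene star `A* = I ⊕ A ⊕ ⋯ ⊕ A^{n-1}`. -/
noncomputable def mpStar {n : ℕ} (A : Fin n → Fin n → EReal) :
    Fin n → Fin n → EReal :=
  fun i j => (Finset.range n).sup fun k => mpPow A k i j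

namespace MPaux

lemma sup_add {α : Type*} (s : Finset α) (f : α → EReal) (c : EReal) :
    s.sup f + c = s.sup fun x => f x + c := by
  rcases s.eq_empty_or_nonempty with h | h
  · simp [h]
  · obtain ⟨x0, hx0, hs⟩ := s.exists_mem_eq_sup h f
    refine le_antisymm ?_ (Finset.sup_le fun x hx =>
      add_le_add_left (Finset.le_sup (f := f) hx) c)
    rw [hs]; exact Finset.le_sup (f := fun x => f x + c) hx0

lemma add_sup {α : Type*} (s : Finset α) (f : α → EReal) (c : EReal) :
    c + s.sup f = s.sup fun x => c + f x := by
  rw [add_comm, sup_add]; simp only [add_comm]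

lemma mpMul_assoc {n : ℕ} (A B C : Fin n → Fin n → EReal) :
    mpMul (mpMul A B) C = mpMul A (mpMul B C) := by
  funext i j
  show (Finset.univ.sup fun k => (Finset.univ.sup fun l => A i l + B l k) + C k j)
      = Finset.univ.sup fun l => A i l + Finset.univ.sup fun k => B l k + C k j
  calc (Finset.univ.sup fun k => (Finset.univ.sup fun l => A i l + B l k) + C k j)
      = Finset.univ.sup fun k => Finset.univ.sup fun l => A i l + B l k + C k j :=
        Finset.sup_congr rfl fun k _ => sup_add _ _ _
    _ = Finset.univ.sup fun l => Finset.univ.sup fun k => A i l + (B l k + C k j) := by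
        rw [Finset.sup_comm]; simp only [add_assoc]
    _ = Finset.univ.sup fun l => A i l + Finset.univ.sup fun k => B l k + C k j :=
        Finset.sup_congr rfl fun l _ => (add_sup _ _ _).symm

lemma mpMul_id {n : ℕ} (A : Fin n → Fin n → EReal) : mpMul A mpId = A := by
  funext i j
  show (Finset.univ.sup fun k => A i k + if k = j then (0:EReal) else ⊥) = A i j
  apply le_antisymm
  · refine Finset.sup_le fun k _ => ?_
    by_cases h : k = j
    · subst h; simp
    · simp [h]
  · have := Finset.le_sup (f := fun k => A i k + if k = j then (0:EReal) else ⊥)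
      (Finset.mem_univ j)
    simpa using this

lemma mpId_mul {n : ℕ} (A : Fin n → Fin n → EReal) : mpMul mpId A = A := by
  funext i j
  show (Finset.univ.sup fun k => (if i = k then (0:EReal) else ⊥) + A k j) = A i j
  apply le_antisymm
  · refine Finset.sup_le fun k _ => ?_
    by_cases h : i = k
    · subst h; simp
    · simp [h]
  · have := Finset.le_sup (f := fun k => (if i = k then (0:EReal) else ⊥) + A k j)
      (Finset.mem_univ i)
    simpa using this

lemma mpPow_succ_left {n : ℕ} (A : Fin n → Fin n → EReal) (k : ℕ) :
    mpMul A (mpPow A k) = mpPow A (k + 1) := by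
  induction k with
  | zero => show mpMul A mpId = mpMul mpId A; rw [mpMul_id, mpId_mul]
  | succ k ih =>
      show mpMul A (mpMul (mpPow A k) A) = mpMul (mpPow A (k+1)) A
      rw [← mpMul_assoc, ih]

/-- Weight of the length-`m` path `v 0, v 1, …, v m`. -/
noncomputable def pw {n : ℕ} (A : Fin n → Fin n → EReal) (m : ℕ) (v : ℕ → Fin n) : EReal :=
  ∑ t ∈ Finset.range m, A (v t) (v (t + 1))

lemma pw_le_pow {n : ℕ} (A : Fin n → Fin n → EReal) :
    ∀ (m : ℕ) (v : ℕ → Fin n), pw A m v ≤ mpPow A m (v 0) (v m) := by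
  intro m
  induction m with
  | zero => intro v; simp [pw, mpPow, mpId]
  | succ m ih =>
      intro v
      have h1 : pw A (m+1) v = pw A m v + A (v m) (v (m+1)) := by
        simp [pw, Finset.sum_range_succ]
      rw [h1]
      calc pw A m v + A (v m) (v (m+1))
          ≤ mpPow A m (v 0) (v m) + A (v m) (v (m+1)) := add_le_add_left (ih v) _
        _ ≤ mpPow A (m+1) (v 0) (v (m+1)) :=
            Finset.le_sup (f := fun k => mpPow A m (v 0) k + A k (v (m+1)))
              (Finset.mem_univ (v m))

lemma pow_le_pw {n : ℕ} (A : Fin n → Fin n → EReal) :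
    ∀ (m : ℕ) (i j : Fin n), ∃ v : ℕ → Fin n, v 0 = i ∧ v (m+1) = j ∧
      mpPow A (m+1) i j ≤ pw A (m+1) v := by
  intro m
  induction m with
  | zero =>
      intro i j
      refine ⟨fun t => if t = 0 then i else j, by simp, by simp, ?_⟩
      have h1 : pw A 1 (fun t => if t = 0 then i else j) = A i j := by
        simp [pw]
      rw [h1]
      show mpMul mpId A i j ≤ A i j
      refine Finset.sup_le fun k _ => ?_
      by_cases h : i = k
      · subst h; simp [mpId]
      · simp [mpId, h]
  | succ m ih =>
      intro i j
      obtain ⟨k0, _, hk0⟩ := Finset.univ.exists_mem_eq_sup ⟨i, Finset.mem_univ i⟩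
        (fun k => mpPow A (m+1) i k + A k j)
      obtain ⟨v, hv0, hvm, hvle⟩ := ih i k0
      refine ⟨fun t => if t ≤ m + 1 then v t else j, by simp [hv0], by simp, ?_⟩
      set v' : ℕ → Fin n := fun t => if t ≤ m + 1 then v t else j with hv'
      have hpw : pw A (m+2) v' = pw A (m+1) v + A k0 j := by
        rw [pw, Finset.sum_range_succ]
        congr 1
        · refine Finset.sum_congr rfl fun t ht => ?_
          have ht' := Finset.mem_range.mp ht
          have e1 : t ≤ m + 1 := by omega
          have e2 : t + 1 ≤ m + 1 := by omega
          have h1 : v' t = v t := if_pos e1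
          have h2 : v' (t+1) = v (t+1) := if_pos e2
          rw [h1, h2]
        · have h1 : v' (m+1) = v (m+1) := if_pos le_rfl
          have h2 : v' (m+2) = j := if_neg (by omega)
          rw [h1, h2, hvm]
      rw [hpw]
      show mpMul (mpPow A (m+1)) A i j ≤ _
      have : mpMul (mpPow A (m+1)) A i j = mpPow A (m+1) i k0 + A k0 j := hk0
      rw [this]
      exact add_le_add_left hvle _

lemma pow_le_pw' {n : ℕ} (A : Fin n → Fin n → EReal) (N : ℕ) (hN : 0 < N) (i j : Fin n) :
    ∃ v : ℕ → Fin n, v 0 = i ∧ v N = j ∧ mpPow A N i j ≤ pw A N v := by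
  obtain ⟨m, rfl⟩ : ∃ m, N = m + 1 := ⟨N - 1, by omega⟩
  exact pow_le_pw A m i j

lemma key {n : ℕ} (A : Fin n → Fin n → EReal) (hTr : mpTr A ≤ 0)
    (v : ℕ → Fin n) (s t : ℕ) (hst : s < t) (htn : t ≤ n) (hvst : v s = v t) :
    pw A n v ≤ mpStar A (v 0) (v n) := by
  set ℓ := t - s with hℓ
  have hl1 : 1 ≤ ℓ := by omega
  have hsl : s + ℓ = t := by omega
  have hsN : s ≤ n - ℓ := by omega
  set f : ℕ → EReal := fun r => A (v r) (v (r + 1)) with hf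
  set v'' : ℕ → Fin n := fun r => if r < s then v r else v (r + ℓ) with hv''
  set g : ℕ → EReal := fun r => A (v'' r) (v'' (r + 1)) with hg
  -- the cycle has nonpositive weight
  have hcyc : ∑ r ∈ Finset.Ico s t, f r ≤ 0 := by
    have h1 : ∑ r ∈ Finset.Ico s t, f r = pw A ℓ (fun r => v (s + r)) := by
      rw [Finset.sum_Ico_eq_sum_range, pw]
      exact Finset.sum_congr (by rw [hℓ]) fun r _ => rfl
    calc ∑ r ∈ Finset.Ico s t, f r = pw A ℓ (fun r => v (s + r)) := h1
      _ ≤ mpPow A ℓ (v (s + 0)) (v (s + ℓ)) := pw_le_pow A ℓ _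
      _ = mpPow A ℓ (v s) (v s) := by rw [Nat.add_zero, hsl, ← hvst]
      _ ≤ mpTrace (mpPow A ℓ) :=
          Finset.le_sup (f := fun i => mpPow A ℓ i i) (Finset.mem_univ (v s))
      _ ≤ mpTr A :=
          Finset.le_sup (f := fun k => mpTrace (mpPow A k))
            (Finset.mem_Icc.mpr ⟨hl1, by omega⟩)
      _ ≤ 0 := hTr
  -- the spliced path agrees with `v` up to `s`
  have hpre : ∀ r, r ≤ s → v'' r = v r := by
    intro r hr
    rcases lt_or_eq_of_le hr with h | h
    · simp only [hv'', if_pos h]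
    · subst h
      simp only [hv'', lt_irrefl, if_false, hsl, ← hvst]
  -- decompose the weight of `v`
  have hsplit : pw A n v = (∑ r ∈ Finset.Ico 0 s, f r + ∑ r ∈ Finset.Ico s t, f r)
      + ∑ r ∈ Finset.Ico t n, f r := by
    show ∑ r ∈ Finset.range n, f r = _
    rw [Finset.range_eq_Ico,
        ← Finset.sum_Ico_consecutive f (by omega : (0:ℕ) ≤ t) htn,
        ← Finset.sum_Ico_consecutive f (Nat.zero_le s) (le_of_lt hst)]
  -- decompose the weight of the spliced path
  have hsplit' : pw A (n - ℓ) v'' = ∑ r ∈ Finset.Ico 0 s, f r + ∑ r ∈ Finset.Ico t n, f r := by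
    have e1 : ∑ r ∈ Finset.Ico 0 s, g r = ∑ r ∈ Finset.Ico 0 s, f r := by
      refine Finset.sum_congr rfl fun r hr => ?_
      have hr' : r < s := (Finset.mem_Ico.mp hr).2
      simp only [hg, hf, hpre r (le_of_lt hr'), hpre (r+1) hr']
    have e2 : ∑ r ∈ Finset.Ico s (n - ℓ), g r = ∑ r ∈ Finset.Ico t n, f r := by
      rw [Finset.sum_Ico_eq_sum_range, Finset.sum_Ico_eq_sum_range,
        show n - ℓ - s = n - t from by omega]
      refine Finset.sum_congr rfl fun r _ => ?_
      have h1 : v'' (s + r) = v (t + r) := by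
        simp only [hv'', if_neg (show ¬ (s + r < s) from by omega)]
        congr 1; omega
      have h2 : v'' (s + r + 1) = v (t + r + 1) := by
        simp only [hv'', if_neg (show ¬ (s + r + 1 < s) from by omega)]
        congr 1; omega
      simp only [hg, hf, h1, h2]
    rw [pw, Finset.range_eq_Ico, ← Finset.sum_Ico_consecutive g (Nat.zero_le s) hsN, e1, e2]
  -- conclude
  have hle2 : pw A n v ≤ pw A (n - ℓ) v'' := by
    rw [hsplit, hsplit']
    calc (∑ r ∈ Finset.Ico 0 s, f r + ∑ r ∈ Finset.Ico s t, f r) + ∑ r ∈ Finset.Ico t n, f r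
        ≤ (∑ r ∈ Finset.Ico 0 s, f r + 0) + ∑ r ∈ Finset.Ico t n, f r :=
          add_le_add_left (add_le_add_right hcyc _) _
      _ = ∑ r ∈ Finset.Ico 0 s, f r + ∑ r ∈ Finset.Ico t n, f r := by rw [add_zero]
  have h0 : v'' 0 = v 0 := hpre 0 (Nat.zero_le s)
  have hn' : v'' (n - ℓ) = v n := by
    simp only [hv'', if_neg (show ¬ (n - ℓ < s) from by omega)]
    congr 1; omega
  calc pw A n v ≤ pw A (n - ℓ) v'' := hle2
    _ ≤ mpPow A (n - ℓ) (v'' 0) (v'' (n - ℓ)) := pw_le_pow A _ _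
    _ = mpPow A (n - ℓ) (v 0) (v n) := by rw [h0, hn']
    _ ≤ mpStar A (v 0) (v n) :=
        Finset.le_sup (f := fun k => mpPow A k (v 0) (v n))
          (Finset.mem_range.mpr (by omega))

lemma pow_dim_le_star {n : ℕ} (A : Fin n → Fin n → EReal) (hTr : mpTr A ≤ 0)
    (i j : Fin n) : mpPow A n i j ≤ mpStar A i j := by
  have hn : 0 < n := i.pos
  obtain ⟨v, hv0, hvn, hle⟩ := pow_le_pw' A n hn i j
  obtain ⟨a, ha, b, hb, hab, hvab⟩ :=
    Finset.exists_ne_map_eq_of_card_lt_of_maps_to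
      (s := Finset.range (n + 1)) (t := (Finset.univ : Finset (Fin n)))
      (by simp) (fun x _ => Finset.mem_univ (v x))
  have ha' : a ≤ n := by have := Finset.mem_range.mp ha; omega
  have hb' : b ≤ n := by have := Finset.mem_range.mp hb; omega
  have hend : pw A n v ≤ mpStar A i j := by
    rw [← hv0, ← hvn]
    rcases hab.lt_or_gt with h | h
    · exact key A hTr v a b h hb' hvab
    · exact key A hTr v b a h ha' hvab.symm
  exact hle.trans hend

lemma pow_le_star {n : ℕ} (A : Fin n → Fin n → EReal) (hTr : mpTr A ≤ 0)
    (k : ℕ) (hk : k ≤ n) (i j : Fin n) : mpPow A k i j ≤ mpStar A i j := by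
  rcases lt_or_eq_of_le hk with h | h
  · exact Finset.le_sup (f := fun k => mpPow A k i j) (Finset.mem_range.mpr h)
  · subst h; exact pow_dim_le_star A hTr i j

lemma sup_ne_top {α : Type*} (s : Finset α) (f : α → EReal) (h : ∀ x ∈ s, f x ≠ ⊤) :
    s.sup f ≠ ⊤ := by
  have : s.sup f < ⊤ := (Finset.sup_lt_iff bot_lt_top).mpr
    fun x hx => lt_top_iff_ne_top.mpr (h x hx)
  exact this.ne

lemma pow_ne_top {n : ℕ} (A : Fin n → Fin n → EReal) (hA : ∀ i j, A i j ≠ ⊤) :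
    ∀ k i j, mpPow A k i j ≠ ⊤ := by
  intro k
  induction k with
  | zero =>
      intro i j
      show mpId i j ≠ ⊤
      unfold mpId
      split <;> simp
  | succ k ih =>
      intro i j
      show Finset.univ.sup (fun x => mpPow A k i x + A x j) ≠ ⊤
      refine sup_ne_top _ _ fun x _ => ?_
      exact (EReal.add_lt_top (ih i x) (hA x j)).ne

lemma star_ne_top {n : ℕ} (A : Fin n → Fin n → EReal) (hA : ∀ i j, A i j ≠ ⊤)
    (i j : Fin n) : mpStar A i j ≠ ⊤ :=
  sup_ne_top _ _ fun k _ => pow_ne_top A hA k i j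

end MPaux


open MPaux

/-- Max-plus: if `Tr(A) ≤ 0`, then for any vector `b` over `ℝ ∪ {-∞}` and any
regular `u ≥ b`, the vector `x = A* u` is a regular solution of `A x ⊕ b ≤ x`. -/
theorem stmt11 {n : ℕ} (A : Fin n → Fin n → EReal) (hA : ∀ i j, A i j ≠ ⊤)
    (hTr : mpTr A ≤ 0) (b : Fin n → EReal) (hb : ∀ i, b i ≠ ⊤)
    (u : Fin n → ℝ) (hub : ∀ i, b i ≤ (u i : EReal)) :
    (∀ i, mpMulVec (mpStar A) (fun j => (u j : EReal)) i ≠ ⊥ ∧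
          mpMulVec (mpStar A) (fun j => (u j : EReal)) i ≠ ⊤) ∧
    (∀ i, mpMulVec A (mpMulVec (mpStar A) fun j => (u j : EReal)) i ⊔ b i ≤
          mpMulVec (mpStar A) (fun j => (u j : EReal)) i) := by
  set x : Fin n → EReal := mpMulVec (mpStar A) (fun j => (u j : EReal)) with hx
  have hxu : ∀ i, (u i : EReal) ≤ x i := by
    intro i
    have h1 : (0 : EReal) ≤ mpStar A i i := by
      have h := Finset.le_sup (f := fun k => mpPow A k i i) (Finset.mem_range.mpr i.pos)
      have h0 : mpPow A 0 i i = 0 := by simp [mpPow, mpId]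
      exact le_trans (le_of_eq h0.symm) h
    calc (u i : EReal) = 0 + u i := (zero_add _).symm
      _ ≤ mpStar A i i + u i := add_le_add_left h1 _
      _ ≤ x i := Finset.le_sup (f := fun j => mpStar A i j + (u j : EReal)) (Finset.mem_univ i)
  constructor
  · intro i
    constructor
    · intro h
      have := hxu i
      rw [h, le_bot_iff] at this
      exact EReal.coe_ne_bot _ this
    · exact sup_ne_top _ _ fun j _ =>
        (EReal.add_lt_top (star_ne_top A hA i j) (EReal.coe_ne_top _)).ne
  · intro i
    refine sup_le ?_ ((hub i).trans (hxu i))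
    refine Finset.sup_le fun j _ => ?_
    have hexp : A i j + x j = Finset.univ.sup fun l => A i j + (mpStar A j l + (u l : EReal)) :=
      add_sup _ _ _
    rw [hexp]
    refine Finset.sup_le fun l _ => ?_
    have h1 : A i j + mpStar A j l ≤ mpStar A i l := by
      have hexp2 : A i j + mpStar A j l =
          (Finset.range n).sup fun k => A i j + mpPow A k j l := add_sup _ _ _
      rw [hexp2]
      refine Finset.sup_le fun k hk => ?_
      have hk' := Finset.mem_range.mp hk
      have h2 : A i j + mpPow A k j l ≤ mpPow A (k + 1) i l := by
        have h3 : A i j + mpPow A k j l ≤ mpMul A (mpPow A k) i l :=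
          Finset.le_sup (f := fun j' => A i j' + mpPow A k j' l) (Finset.mem_univ j)
        rwa [mpPow_succ_left] at h3
      exact h2.trans (pow_le_star A hTr (k + 1) hk' i l)
    calc A i j + (mpStar A j l + (u l : EReal)) = (A i j + mpStar A j l) + u l :=
        (add_assoc _ _ _).symm
      _ ≤ mpStar A i l + u l := add_le_add_left h1 _
      _ ≤ x i := Finset.le_sup (f := fun j' => mpStar A i j' + (u j' : EReal)) (Finset.mem_univ l)
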